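/- Let $a > 15788$ be a real number, let $f(x) = (2904 x)^x a^{x/(x-1)}$, and let $m_0 := \left\lfloor \sqrt{\frac{2 \log a}{\log\log a - \log\log\log a + 16}} + 2 \right\rfloor$. Then $f(m_0) \leq a^{1 + \frac{183}{\log\log a}}$. -/

import Mathlib

set_option maxHeartbeats 1000000

private lemma aux_sq3 (t : ℝ) (h9 : 9 ≤ t^4) : 3 ≤ t^2 := by
  nlinarith [sq_nonneg (t^2 - 3), sq_nonneg (t^2 + 3), sq_nonneg t]

private lemma aux_t173 (t : ℝ) (ht : 0 < t) (h3 : 3 ≤ t^2) : (1.73:ℝ) ≤ t := by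
  nlinarith

private lemma aux_C (u : ℝ) : 8*(u-1) ≤ 2*u^2 := by nlinarith [sq_nonneg (u-2)]

private lemma aux_B3 (t : ℝ) (h3 : 3 ≤ t^2) : 2*t^4 ≤ (2*t^2-2)^2 * 17 := by
  nlinarith [sq_nonneg t, sq_nonneg (t^2 - 3)]

private lemma aux_B1 (t l : ℝ) (ht : (1.73:ℝ) ≤ t) (hl0 : 0 ≤ l) (hlt : l ≤ 2*t) :
    2*t^2*(9 + l/2)*l ≤ 25*t^4 := by
  have ht0 : (0:ℝ) ≤ t := by linarith
  have h1 : l^2 ≤ (2*t)^2 := by nlinarith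
  have h2 : t^2 * l^2 ≤ t^2 * (2*t)^2 :=
    mul_le_mul_of_nonneg_left h1 (by positivity)
  have h3 : 18*t^2*l ≤ 18*t^2*(2*t) := by nlinarith
  have h4 : (1.73:ℝ)*t^3 ≤ t*t^3 :=
    mul_le_mul_of_nonneg_right ht (by positivity)
  nlinarith [h2, h3, h4]

private lemma aux_B2 (t l q : ℝ) (ht : (1.73:ℝ) ≤ t) (h3t : 3 ≤ t^2) (hl2 : 2 ≤ l)
    (hlt : l ≤ 2*t) (hq : 1 ≤ q) (hqD : 2*t^4 ≤ q^2*(l+16)) : l ≤ 4*q := by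
  have ht0 : (0:ℝ) ≤ t := by linarith
  have hl0 : (0:ℝ) ≤ l := by linarith
  have h1 : l^3 ≤ (2*t)^3 := by
    nlinarith [mul_le_mul_of_nonneg_left hlt (mul_nonneg hl0 hl0),
      mul_le_mul_of_nonneg_left hlt (mul_nonneg (by linarith : (0:ℝ) ≤ 2*t) hl0),
      mul_le_mul_of_nonneg_left hlt (mul_nonneg (by linarith : (0:ℝ) ≤ 2*t) (by linarith : (0:ℝ) ≤ 2*t))]
  have h2 : l^2 ≤ (2*t)^2 := by nlinarith
  have hcube : l^2*(l+16) ≤ 32*t^4 := by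
    have h4 : (1.73:ℝ)*t^3 ≤ t*t^3 :=
      mul_le_mul_of_nonneg_right ht (by positivity)
    have h5 : t^2*3 ≤ t^2*t^2 :=
      mul_le_mul_of_nonneg_left h3t (by positivity)
    nlinarith [h1, h2, h4, h5]
  have hstep : l^2 ≤ 16*q^2 := by nlinarith [hqD, hcube]
  nlinarith [hstep, hq]

private lemma aux_B4 (t l q : ℝ) (ht : 0 < t) (h : l ≤ 4*q) : t^4 * l ≤ 4*t^4*q := by
  nlinarith [mul_le_mul_of_nonneg_left h (by positivity : (0:ℝ) ≤ t^4)]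

theorem stmt_17 (a : ℝ) (ha : 15788 < a) (m₀ : ℤ)
    (hm₀ : m₀ = ⌊Real.sqrt (2 * Real.log a /
      (Real.log (Real.log a) - Real.log (Real.log (Real.log a)) + 16)) + 2⌋) :
    Real.rpow (2904 * (m₀ : ℝ)) (m₀ : ℝ) *
      Real.rpow a ((m₀ : ℝ) / ((m₀ : ℝ) - 1)) ≤
    Real.rpow a (1 + 183 / Real.log (Real.log a)) := by
  have ha0 : (0:ℝ) < a := by linarith
  set L := Real.log a with hLdef
  set l := Real.log L with hldef
  have hE : Real.exp 1 < 2.7182818286 := Real.exp_one_lt_d9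
  have hE' : (2.7182818283:ℝ) < Real.exp 1 := Real.exp_one_gt_d9
  have hexp9 : Real.exp 9 ≤ a := by
    have h9 : Real.exp 9 = (Real.exp 1)^(9:ℕ) := by
      rw [← Real.exp_nat_mul]; norm_num
    have h1 : (Real.exp 1)^(9:ℕ) ≤ (2.7182818286:ℝ)^(9:ℕ) :=
      pow_le_pow_left₀ (Real.exp_pos 1).le hE.le 9
    have h2 : (2.7182818286:ℝ)^(9:ℕ) < 15788 := by norm_num
    linarith [h9.le, h9.ge]
  have hL9 : (9:ℝ) ≤ L := (Real.le_log_iff_exp_le ha0).mpr hexp9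
  have hL0 : (0:ℝ) < L := by linarith
  have hl2 : (2:ℝ) ≤ l := by
    have hexp2 : Real.exp 2 ≤ L := by
      have h9 : Real.exp 2 = (Real.exp 1)^(2:ℕ) := by
        rw [← Real.exp_nat_mul]; norm_num
      have h1 : (Real.exp 1)^(2:ℕ) ≤ (2.7182818286:ℝ)^(2:ℕ) :=
        pow_le_pow_left₀ (Real.exp_pos 1).le hE.le 2
      have h2 : (2.7182818286:ℝ)^(2:ℕ) < 9 := by norm_num
      linarith [h9.le, h9.ge]
    exact (Real.le_log_iff_exp_le hL0).mpr hexp2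
  have hl0 : (0:ℝ) < l := by linarith
  set D := l - Real.log l + 16 with hDdef
  have hD17 : (17:ℝ) ≤ D := by
    have := Real.log_le_sub_one_of_pos hl0
    simp only [hDdef]; linarith
  have hDle : D ≤ l + 16 := by
    have : 0 ≤ Real.log l := Real.log_nonneg (by linarith)
    simp only [hDdef]; linarith
  have hD0 : (0:ℝ) < D := by linarith
  set M := Real.sqrt (2 * L / D) with hMdef
  have hMnn : 0 ≤ M := Real.sqrt_nonneg _
  have hM2 : M^2 = 2 * L / D := Real.sq_sqrt (by positivity)
  set m := (m₀ : ℝ) with hmdef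
  have hm_le : m ≤ M + 2 := by
    rw [hmdef, hm₀]; exact Int.floor_le _
  have hm_gt : M + 1 < m := by
    have h := Int.lt_floor_add_one (M + 2)
    rw [hmdef, hm₀]; push_cast; linarith
  have hm2 : (2:ℝ) ≤ m := by
    have h : (2:ℤ) ≤ m₀ := by
      rw [hm₀]; exact Int.le_floor.mpr (by push_cast; linarith)
    rw [hmdef]; exact_mod_cast h
  set t := L ^ ((4:ℝ)⁻¹) with htdef
  set u := L ^ ((8:ℝ)⁻¹) with hudef
  have ht0 : 0 < t := Real.rpow_pos_of_pos hL0 _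
  have hu0 : 0 < u := Real.rpow_pos_of_pos hL0 _
  have hu2t : u^2 = t := by
    rw [htdef, hudef, ← Real.rpow_natCast (L ^ ((8:ℝ)⁻¹)) 2, ← Real.rpow_mul hL0.le]
    norm_num
  have ht4 : t^4 = L := by
    rw [htdef, ← Real.rpow_natCast (L ^ ((4:ℝ)⁻¹)) 4, ← Real.rpow_mul hL0.le]
    norm_num
  have hlogt : Real.log t = l / 4 := by
    rw [htdef, Real.log_rpow hL0]; ring
  have hlogu : Real.log u = l / 8 := by
    rw [hudef, Real.log_rpow hL0]; ring
  have hl2t : l ≤ 2 * t := by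
    have h1 : Real.log u ≤ u - 1 := Real.log_le_sub_one_of_pos hu0
    have h2 := aux_C u
    rw [hlogu] at h1
    linarith [hu2t.le, hu2t.ge]
  have ht2 : (3:ℝ) ≤ t^2 := aux_sq3 t (by rw [ht4]; exact hL9)
  have ht173 : (1.73:ℝ) ≤ t := aux_t173 t ht0 ht2
  have hm2t : m ≤ 2 * t^2 := by
    have hMle : M ≤ 2 * t^2 - 2 := by
      have h1 : 2 * L / D ≤ 2 * L / 17 :=
        div_le_div_of_nonneg_left (by linarith) (by norm_num) hD17
      have h2 : 2 * L / 17 ≤ (2 * t^2 - 2)^2 := by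
        rw [← ht4, div_le_iff₀ (by norm_num : (0:ℝ) < 17)]
        exact aux_B3 t ht2
      calc M = Real.sqrt (2 * L / D) := hMdef
      _ ≤ Real.sqrt ((2 * t^2 - 2)^2) := Real.sqrt_le_sqrt (by linarith)
      _ = |2 * t^2 - 2| := Real.sqrt_sq_eq_abs _
      _ = 2 * t^2 - 2 := abs_of_nonneg (by linarith)
    linarith
  set q := m - 1 with hqdef
  have hq1 : (1:ℝ) ≤ q := by simp only [hqdef]; linarith
  have hq0 : (0:ℝ) < q := by linarith
  have hqM : M ≤ q := by simp only [hqdef]; linarith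
  have hqD : 2 * t^4 ≤ q^2 * (l + 16) := by
    have h1 : 2 * L / (l + 16) ≤ 2 * L / D :=
      div_le_div_of_nonneg_left (by linarith) hD0 hDle
    have hMq : M^2 ≤ q^2 := pow_le_pow_left₀ hMnn hqM 2
    have h2 : 2 * L / (l + 16) ≤ q^2 := h1.trans (hM2.symm.le.trans hMq)
    rw [div_le_iff₀ (by linarith : (0:ℝ) < l + 16)] at h2
    rw [ht4]; linarith
  have hlog2904 : Real.log 2904 ≤ 8 := by
    have h9 : Real.exp 8 = (Real.exp 1)^(8:ℕ) := by
      rw [← Real.exp_nat_mul]; norm_num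
    have h1 : (2.7182818283:ℝ)^(8:ℕ) ≤ (Real.exp 1)^(8:ℕ) :=
      pow_le_pow_left₀ (by norm_num) hE'.le 8
    have h2 : (2904:ℝ) ≤ (2.7182818283:ℝ)^(8:ℕ) := by norm_num
    rw [Real.log_le_iff_le_exp (by norm_num)]
    linarith [h9.le, h9.ge]
  have hm0' : (0:ℝ) < m := by linarith
  have hlogm : Real.log m ≤ 1 + l / 2 := by
    have h1 : Real.log m ≤ Real.log (2 * t^2) := Real.log_le_log hm0' hm2t
    have h2 : Real.log (2 * t^2) = Real.log 2 + 2 * Real.log t := by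
      rw [Real.log_mul (by norm_num) (by positivity), Real.log_pow]; push_cast; ring
    have h3 : Real.log 2 ≤ 1 := by
      have := Real.log_two_lt_d9; linarith
    rw [h2, hlogt] at h1; linarith
  have hlog2904m : Real.log (2904 * m) ≤ 9 + l / 2 := by
    rw [Real.log_mul (by norm_num) (ne_of_gt hm0')]
    linarith
  have hlognn : 0 ≤ Real.log (2904 * m) := by
    apply Real.log_nonneg; nlinarith
  have key1 : m * Real.log (2904 * m) ≤ 25 * t^4 / l := by
    have h1 : m * Real.log (2904 * m) ≤ (2 * t^2) * (9 + l / 2) :=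
      mul_le_mul hm2t hlog2904m hlognn (by positivity)
    have h2 : (2 * t^2) * (9 + l / 2) ≤ 25 * t^4 / l := by
      rw [le_div_iff₀ hl0]
      exact aux_B1 t l ht173 hl0.le hl2t
    linarith
  have key2 : L / q ≤ 4 * t^4 / l := by
    have hl4q : l ≤ 4 * q := aux_B2 t l q ht173 ht2 hl2 hl2t hq1 hqD
    rw [← ht4, div_le_div_iff₀ hq0 hl0]
    exact aux_B4 t l q ht0 hl4q
  have key : m * Real.log (2904 * m) + L / q ≤ 183 * (L / l) := by
    have h0 : (0:ℝ) ≤ t^4 / l := by positivity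
    have e1 : 25 * t^4 / l + 4 * t^4 / l = 29 * (t^4 / l) := by ring
    have e2 : 183 * (t^4 / l) = 183 * (L / l) := by rw [ht4]
    linarith [key1, key2]
  have hfrac : m / (m - 1) = 1 + 1 / q := by
    rw [hqdef, one_add_div (by linarith : m - 1 ≠ 0), sub_add_cancel]
  have hmain : Real.log (2904 * m) * m + L * (m / (m - 1)) ≤ L * (1 + 183 / l) := by
    rw [hfrac]
    have e1 : L * (1 + 1 / q) = L + L / q := by ring
    have e2 : L * (1 + 183 / l) = L + 183 * (L / l) := by ring
    rw [e1, e2]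
    linarith [key]
  have h2904m : (0:ℝ) < 2904 * m := by linarith
  show (2904 * m) ^ m * a ^ (m / (m - 1)) ≤ a ^ (1 + 183 / l)
  rw [Real.rpow_def_of_pos h2904m, Real.rpow_def_of_pos ha0, Real.rpow_def_of_pos ha0,
    ← Real.exp_add, Real.exp_le_exp]
  exact hmain
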